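/- Let q > 1, α ∈ [0,1], k ≥ 2, 1 ≤ j ≤ k-1, and 0 ≤ i < j-1. Then lim_{n→∞} a_{n,q}(k-j, k-i)/(λ_{k,q}^{(α,n)} - λ_{k-j,q}^{(α,n)}) = 0. -/

import Mathlib

open Finset Filter Topology

/-- The q-integer `[m]_q = 1 + q + ... + q^{m-1}`, with `[0]_q = 0`. -/
noncomputable def qInt (q : ℝ) (m : ℕ) : ℝ := ∑ i ∈ Finset.range m, q ^ i

/-- The q-factorial `[n]_q! = [1]_q [2]_q ⋯ [n]_q`. -/
noncomputable def qFact (q : ℝ) (n : ℕ) : ℝ := ∏ i ∈ Finset.range n, qInt q (i + 1)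

/-- The q-binomial coefficient `[n]_q!/([k]_q! [n-k]_q!)` (zero if `k > n`). -/
noncomputable def qBinom (q : ℝ) (n k : ℕ) : ℝ :=
  if k ≤ n then qFact q n / (qFact q k * qFact q (n - k)) else 0

/-- The q-Stirling number of the second kind. -/
noncomputable def qStirling (q : ℝ) (k r : ℕ) : ℝ :=
  (1 / (qFact q r * q ^ (r * (r - 1) / 2))) *
    ∑ i ∈ Finset.range (r + 1),
      (-1 : ℝ) ^ i * q ^ (i * (i - 1) / 2) * qBinom q r i * (qInt q (r - i)) ^ k

/-- The q-forward difference operator on sequences: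
`Δ_q^0 f_i = f_i`, `Δ_q^{r+1} f_i = Δ_q^r f_{i+1} - q^r Δ_q^r f_i`. -/
noncomputable def qDiff (q : ℝ) : ℕ → (ℕ → ℝ) → ℕ → ℝ
  | 0, f, i => f i
  | r + 1, f, i => qDiff q r f (i + 1) - q ^ r * qDiff q r f i

/-- The eigenvalues `λ_{k,q}^{(α,n)}` of the (α,q)-Bernstein operator. -/
noncomputable def lamEig (q α : ℝ) (n k : ℕ) : ℝ :=
  q ^ (k * (k - 1) / 2) * qFact q (n - 2) / (qFact q (n - k) * (qInt q n) ^ k) *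
    ((1 - α) * qInt q (n - k) * qInt q (n - 1 + k) + α * qInt q n * qInt q (n - 1))

/-- The coefficients `a_{n,q}(r,k)` of `T_{n,q,α}(t^k; x) = Σ_r a_{n,q}(r,k) x^r`. -/
noncomputable def aCoef (q α : ℝ) (n r k : ℕ) : ℝ :=
  q ^ (r * (r - 1) / 2) * qFact q (n - 2) / ((qInt q n) ^ k * qFact q (n - r)) *
    ((1 - α) * qInt q (n - r) *
        (qInt q (n + r - 1) * qStirling q (k + 1) (r + 1) -
          qInt q (r + 1) * qInt q (n - 1) * qStirling q k (r + 1)) +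
      α * qInt q n * qInt q (n - 1) * qStirling q k r)

/-- The (α,q)-Bernstein operator, via its forward-difference representation
`T_{n,q,α}(f;x) = Σ_{r=0}^n ((1-α) C_q(n-1,r) Δ_q^r g_0 + α C_q(n,r) Δ_q^r f_0) x^r`,
where `f_i = f([i]_q/[n]_q)` and
`g_i = (1 - q^{n-i-1}[i]_q/[n-1]_q) f_i + (q^{n-i-1}[i]_q/[n-1]_q) f_{i+1}`. -/
noncomputable def Talpha (q α : ℝ) (n : ℕ) (f : ℝ → ℝ) (x : ℝ) : ℝ :=
  let fs : ℕ → ℝ := fun i => f (qInt q i / qInt q n)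
  let gs : ℕ → ℝ := fun i =>
    (1 - q ^ (n - i - 1) * qInt q i / qInt q (n - 1)) * fs i +
      (q ^ (n - i - 1) * qInt q i / qInt q (n - 1)) * fs (i + 1)
  ∑ r ∈ Finset.range (n + 1),
    ((1 - α) * qBinom q (n - 1) r * qDiff q r gs 0 + α * qBinom q n r * qDiff q r fs 0) * x ^ r


section
variable {q : ℝ} (hq : 1 < q)
include hq

lemma qInt_nonneg (m : ℕ) : 0 ≤ qInt q m := by
  apply Finset.sum_nonneg; intro i _; positivity

lemma qInt_one_le {m : ℕ} (hm : 1 ≤ m) : 1 ≤ qInt q m := by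
  calc (1:ℝ) = ∑ i ∈ Finset.range 1, q ^ i := by simp
  _ ≤ qInt q m := by
    apply Finset.sum_le_sum_of_subset_of_nonneg
    · exact Finset.range_subset_range.2 hm
    · intro i _ _; positivity

lemma qInt_pos {m : ℕ} (hm : 1 ≤ m) : 0 < qInt q m :=
  lt_of_lt_of_le one_pos (qInt_one_le hq hm)

lemma qInt_mono {a b : ℕ} (h : a ≤ b) : qInt q a ≤ qInt q b := by
  apply Finset.sum_le_sum_of_subset_of_nonneg (Finset.range_subset_range.2 h)
  intro i _ _; positivity

lemma qInt_add (a b : ℕ) : qInt q (a + b) = qInt q a + q ^ a * qInt q b := by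
  unfold qInt
  rw [Finset.sum_range_add, Finset.mul_sum]
  congr 1; apply Finset.sum_congr rfl; intro i _; rw [← pow_add]

lemma qInt_succ' (a : ℕ) : qInt q (1 + a) = 1 + q * qInt q a := by
  rw [qInt_add hq]; simp [qInt]

lemma qInt_sub {s n : ℕ} (h : s ≤ n) :
    q ^ s * qInt q (n - s) = qInt q n - qInt q s := by
  have := qInt_add hq s (n - s)
  rw [Nat.add_sub_cancel' h] at this
  linarith

lemma qFact_pos (n : ℕ) : 0 < qFact q n := by
  apply Finset.prod_pos; intro i _; exact qInt_pos hq (by omega)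

lemma qFact_add_prod (a b : ℕ) :
    qFact q (a + b) = qFact q a * ∏ t ∈ Finset.range b, qInt q (a + t + 1) := by
  unfold qFact
  rw [Finset.prod_range_add]

lemma qInt_ge_nat (n : ℕ) : (n : ℝ) ≤ qInt q n := by
  calc (n:ℝ) = ∑ _i ∈ Finset.range n, (1:ℝ) := by simp
  _ ≤ qInt q n := by
    apply Finset.sum_le_sum; intro i _
    exact one_le_pow₀ hq.le

lemma tendsto_qInt_atTop : Tendsto (fun n => qInt q n) atTop atTop :=
  tendsto_atTop_mono (qInt_ge_nat hq) tendsto_natCast_atTop_atTop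

lemma tendsto_qInt_inv : Tendsto (fun n => (qInt q n)⁻¹) atTop (𝓝 0) :=
  tendsto_inv_atTop_zero.comp (tendsto_qInt_atTop hq)

lemma ratio_sub_tendsto (s : ℕ) :
    Tendsto (fun n => qInt q (n - s) / qInt q n) atTop (𝓝 ((q ^ s)⁻¹)) := by
  have hqs : (0:ℝ) < q ^ s := by positivity
  have h : Tendsto (fun n : ℕ => (1 - qInt q s * (qInt q n)⁻¹) / q ^ s) atTop
      (𝓝 ((q ^ s)⁻¹)) := by
    have := ((tendsto_const_nhds (x := (1:ℝ))).sub
      ((tendsto_const_nhds (x := qInt q s)).mul (tendsto_qInt_inv hq))).div_const (q ^ s)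
    simpa using this
  apply h.congr'
  filter_upwards [eventually_ge_atTop (s + 1)] with n hn
  have hn0 : qInt q n ≠ 0 := ne_of_gt (qInt_pos hq (by omega))
  have hqs0 : (q:ℝ)^s ≠ 0 := ne_of_gt hqs
  have hsub : qInt q (n - s) = (qInt q n - qInt q s) / q ^ s := by
    rw [eq_div_iff hqs0, mul_comm]; exact qInt_sub hq (show s ≤ n by omega)
  rw [hsub]
  field_simp

lemma ratio_add_tendsto (s : ℕ) :
    Tendsto (fun n => qInt q (n + s) / qInt q n) atTop (𝓝 (q ^ s)) := by
  have h : Tendsto (fun n : ℕ => qInt q s * (qInt q n)⁻¹ + q ^ s) atTop (𝓝 (q ^ s)) := by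
    have := ((tendsto_const_nhds (x := qInt q s)).mul (tendsto_qInt_inv hq)).add
      (tendsto_const_nhds (x := (q:ℝ) ^ s))
    simpa using this
  apply h.congr'
  filter_upwards [eventually_ge_atTop 1] with n hn
  have hn0 : qInt q n ≠ 0 := ne_of_gt (qInt_pos hq (by omega))
  have : qInt q (n + s) = qInt q s + q ^ s * qInt q n := by
    rw [Nat.add_comm, qInt_add hq]
  rw [this]; field_simp

lemma ratio_pred_tendsto :
    Tendsto (fun n => qInt q n / qInt q (n - 1)) atTop (𝓝 q) := by
  have h := (ratio_sub_tendsto hq 1).inv₀ (by positivity)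
  have : ((q ^ 1)⁻¹ : ℝ)⁻¹ = q := by simp
  rw [this] at h
  apply h.congr'
  filter_upwards [eventually_ge_atTop 2] with n hn
  simp [inv_div]

end

section
variable {q : ℝ} (hq : 1 < q)
include hq

lemma qFact_split (r n : ℕ) (hn : r + 2 ≤ n) :
    qFact q (n - 2) * (qInt q (n - 1) * qInt q n) =
      qFact q (n - r) * ∏ t ∈ Finset.range r, qInt q (n - t) := by
  have h1 : qFact q n = qFact q (n - 2) * (qInt q (n - 1) * qInt q n) := by
    have := qFact_add_prod hq (n - 2) 2
    rw [show n - 2 + 2 = n by omega] at this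
    rw [this, Finset.prod_range_succ, Finset.prod_range_succ, Finset.prod_range_zero]
    rw [show n - 2 + 0 + 1 = n - 1 by omega]
    rw [show n - 1 + 1 = n by omega]
    ring
  have h2 : qFact q n = qFact q (n - r) * ∏ t ∈ Finset.range r, qInt q (n - t) := by
    have := qFact_add_prod hq (n - r) r
    rw [show n - r + r = n by omega] at this
    rw [this]
    congr 1
    rw [← Finset.prod_range_reflect]
    apply Finset.prod_congr rfl
    intro t ht
    simp only [Finset.mem_range] at ht
    congr 1
    omega
  rw [← h1, h2]

lemma aCoef_mul_tendsto (α : ℝ) (r K : ℕ) (hr : 1 ≤ r) (hK : r + 2 ≤ K) :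
    Tendsto (fun n => qInt q n * aCoef q α n r K) atTop (𝓝 0) := by
  set S1 := qStirling q (K + 1) (r + 1) with hS1
  set S2 := qStirling q K (r + 1) with hS2
  set S3 := qStirling q K r with hS3
  have T1 : Tendsto (fun n : ℕ => ∏ t ∈ Finset.range r, (qInt q (n - t) / qInt q n))
      atTop (𝓝 (∏ t ∈ Finset.range r, ((q : ℝ) ^ t)⁻¹)) :=
    tendsto_finset_prod _ (fun t _ => ratio_sub_tendsto hq t)
  have T2 := ratio_pred_tendsto hq
  have Tadd : Tendsto (fun n : ℕ => qInt q (n + r - 1) / qInt q n) atTop (𝓝 (q ^ (r - 1))) := by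
    apply (ratio_add_tendsto hq (r - 1)).congr
    intro n
    rw [show n + (r - 1) = n + r - 1 by omega]
  have Tsub1 := ratio_sub_tendsto hq 1
  have Tsubr := ratio_sub_tendsto hq r
  have T3 : Tendsto (fun n : ℕ =>
      (1 - α) * (qInt q (n - r) / qInt q n) *
        ((qInt q (n + r - 1) / qInt q n) * S1 -
          qInt q (r + 1) * (qInt q (n - 1) / qInt q n) * S2) +
        α * (qInt q (n - 1) / qInt q n) * S3) atTop
      (𝓝 ((1 - α) * (q ^ r)⁻¹ * (q ^ (r - 1) * S1 - qInt q (r + 1) * (q ^ 1)⁻¹ * S2) +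
        α * (q ^ 1)⁻¹ * S3)) := by
    exact ((tendsto_const_nhds.mul Tsubr).mul
      ((Tadd.mul tendsto_const_nhds).sub
        ((tendsto_const_nhds.mul Tsub1).mul tendsto_const_nhds))).add
      ((tendsto_const_nhds.mul Tsub1).mul tendsto_const_nhds)
  have T4 : Tendsto (fun n : ℕ => ((qInt q n ^ (K - r - 1))⁻¹ : ℝ)) atTop (𝓝 0) := by
    apply tendsto_inv_atTop_zero.comp
    exact (tendsto_pow_atTop (by omega : K - r - 1 ≠ 0)).comp (tendsto_qInt_atTop hq)
  have hE := ((((tendsto_const_nhds (x := (q : ℝ) ^ (r * (r - 1) / 2))).mul T1).mul T2).mul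
    T3).mul T4
  rw [mul_zero] at hE
  apply hE.congr'
  filter_upwards [eventually_ge_atTop (r + K + 2)] with n hn
  have hN : qInt q n ≠ 0 := ne_of_gt (qInt_pos hq (by omega))
  have hN1 : qInt q (n - 1) ≠ 0 := ne_of_gt (qInt_pos hq (by omega))
  have hF : qFact q (n - r) ≠ 0 := ne_of_gt (qFact_pos hq _)
  have hsplit := qFact_split hq r n (by omega)
  have hpow : qInt q n ^ K = qInt q n ^ (K - r - 1) * qInt q n ^ r * qInt q n := by
    rw [← pow_add, ← pow_succ]
    congr 1
    omega
  have hprod : ∏ t ∈ Finset.range r, (qInt q (n - t) / qInt q n) =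
      (∏ t ∈ Finset.range r, qInt q (n - t)) / qInt q n ^ r := by
    rw [Finset.prod_div_distrib, Finset.prod_const, Finset.card_range]
  rw [hprod]
  unfold aCoef
  rw [← hS1, ← hS2, ← hS3, hpow]
  have hfact : qFact q (n - 2) =
      qFact q (n - r) * (∏ t ∈ Finset.range r, qInt q (n - t)) /
        (qInt q (n - 1) * qInt q n) := by
    rw [eq_div_iff (by positivity)]
    linarith [hsplit]
  rw [hfact]
  field_simp
end
noncomputable def Pfun (q α : ℝ) (k : ℕ) (u : ℝ) : ℝ :=
  if 2 ≤ k then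
    ((1 - α) * (1 - qInt q k * u) * (q ^ (k - 1) + qInt q (k - 1) * u) / q ^ (k - 1) +
        α * (1 - u)) * ∏ t ∈ Finset.range (k - 2), (1 - qInt q (t + 2) * u)
  else 1

noncomputable def Pd (q α : ℝ) (k : ℕ) : ℝ :=
  if 2 ≤ k then
    (1 - α) * ((qInt q (k - 1) - qInt q k * q ^ (k - 1)) / q ^ (k - 1)) - α -
      ∑ t ∈ Finset.range (k - 2), qInt q (t + 2)
  else 0

lemma exp_sum (k : ℕ) (hk : 2 ≤ k) :
    k * (k - 1) / 2 = (∑ t ∈ Finset.range (k - 2), (t + 2)) + 1 := by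
  obtain ⟨m, rfl⟩ : ∃ m, k = m + 2 := ⟨k - 2, by omega⟩
  have h1 := Finset.sum_range_id_mul_two m
  have h2 : (m + 2) * (m + 2 - 1) = m * (m - 1) + 4 * m + 2 := by
    cases m with
    | zero => norm_num
    | succ s => simp [Nat.succ_sub_one]; ring
  have h3 : ∑ t ∈ Finset.range (m + 2 - 2), (t + 2) = (∑ i ∈ Finset.range m, i) + 2 * m := by
    simp [Finset.sum_add_distrib, Finset.sum_const, Finset.card_range, mul_comm]
  rw [h3]
  omega

section
variable {q : ℝ} (hq : 1 < q)
include hq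

lemma Pfun_zero (α : ℝ) (k : ℕ) : Pfun q α k 0 = 1 := by
  have hqk : (q : ℝ) ^ (k - 1) ≠ 0 := by positivity
  unfold Pfun
  split
  · simp
    field_simp
    ring
  · rfl

lemma lamEig_eq (α : ℝ) {k n : ℕ} (hk : 2 ≤ k) (hn : k + 2 ≤ n) :
    lamEig q α n k = Pfun q α k (qInt q n)⁻¹ := by
  have hq0 : (0:ℝ) < q := lt_trans one_pos hq
  have hN : qInt q n ≠ 0 := ne_of_gt (qInt_pos hq (by omega))
  have hqk1 : (q:ℝ) ^ (k - 1) ≠ 0 := by positivity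
  have hF : qFact q (n - k) ≠ 0 := ne_of_gt (qFact_pos hq _)
  unfold lamEig Pfun
  rw [if_pos hk]
  have hfact := qFact_add_prod hq (n - k) (k - 2)
  rw [show n - k + (k - 2) = n - 2 by omega] at hfact
  rw [hfact]
  have hre : ∏ t ∈ Finset.range (k - 2), qInt q (n - k + t + 1)
      = ∏ t ∈ Finset.range (k - 2), qInt q (n - (t + 2)) := by
    conv_rhs => rw [← Finset.prod_range_reflect]
    apply Finset.prod_congr rfl
    intro t ht
    simp only [Finset.mem_range] at ht
    congr 1
    omega
  rw [hre]
  have hP : ∏ t ∈ Finset.range (k - 2), qInt q (n - (t + 2)) =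
      qInt q n ^ (k - 2) *
        (∏ t ∈ Finset.range (k - 2), (1 - qInt q (t + 2) * (qInt q n)⁻¹)) /
        q ^ (∑ t ∈ Finset.range (k - 2), (t + 2)) := by
    rw [eq_div_iff (by positivity), ← Finset.prod_pow_eq_pow_sum]
    rw [show qInt q n ^ (k - 2) = ∏ _t ∈ Finset.range (k - 2), qInt q n from by
      rw [Finset.prod_const, Finset.card_range]]
    rw [← Finset.prod_mul_distrib, ← Finset.prod_mul_distrib]
    apply Finset.prod_congr rfl
    intro t ht
    simp only [Finset.mem_range] at ht
    have hs := qInt_sub hq (show t + 2 ≤ n by omega)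
    rw [mul_comm (qInt q (n - (t + 2))), hs]
    field_simp
  rw [hP]
  rw [show (q:ℝ) ^ (k * (k - 1) / 2)
      = q ^ (∑ t ∈ Finset.range (k - 2), (t + 2)) * q from by
    rw [← pow_succ]; congr 1; exact exp_sum k hk]
  have h3 : qInt q (n - 1 + k) = qInt q (k - 1) + q ^ (k - 1) * qInt q n := by
    rw [show n - 1 + k = (k - 1) + n by omega, qInt_add hq]
  have h4 : qInt q n ^ k = qInt q n ^ (k - 2) * qInt q n ^ 2 := by
    rw [← pow_add]; congr 1; omega
  have h1' : qInt q (n - k) = (qInt q n - qInt q k) / (q ^ (k - 1) * q) := by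
    rw [eq_div_iff (by positivity), show (q:ℝ) ^ (k-1) * q = q ^ k from by
      rw [← pow_succ]; congr 1; omega, mul_comm (qInt q (n - k))]
    exact qInt_sub hq (by omega)
  have h2' : qInt q (n - 1) = (qInt q n - 1) / q := by
    rw [eq_div_iff (ne_of_gt hq0), mul_comm (qInt q (n - 1))]
    have := qInt_sub hq (show 1 ≤ n by omega)
    simpa [qInt] using this
  rw [h3, h4, h1', h2']
  field_simp
  ring

lemma lamEig_one (α : ℝ) {n : ℕ} (hn : 3 ≤ n) : lamEig q α n 1 = 1 := by
  have hN : qInt q n ≠ 0 := ne_of_gt (qInt_pos hq (by omega))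
  have hN1 : qInt q (n - 1) ≠ 0 := ne_of_gt (qInt_pos hq (by omega))
  have hF : qFact q (n - 2) ≠ 0 := ne_of_gt (qFact_pos hq _)
  unfold lamEig
  have hfact : qFact q (n - 1) = qFact q (n - 2) * qInt q (n - 1) := by
    have := qFact_add_prod hq (n - 2) 1
    rw [show n - 2 + 1 = n - 1 by omega] at this
    rw [this, Finset.prod_range_succ, Finset.prod_range_zero]
    rw [show n - 2 + 0 + 1 = n - 1 by omega]
    ring
  rw [hfact, show n - 1 + 1 = n by omega]
  field_simp
  ring

lemma lamEig_eq' (α : ℝ) {r n : ℕ} (hr : 1 ≤ r) (hn : r + 3 ≤ n) :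
    lamEig q α n r = Pfun q α r (qInt q n)⁻¹ := by
  rcases Nat.lt_or_ge r 2 with h | h
  · have : r = 1 := by omega
    subst this
    rw [lamEig_one hq α (by omega)]
    unfold Pfun
    rw [if_neg (by omega)]
  · exact lamEig_eq hq α h (by omega)

lemma hasDerivAt_Q (m : ℕ) :
    HasDerivAt (fun u : ℝ => ∏ t ∈ Finset.range m, (1 - qInt q (t + 2) * u))
      (-∑ t ∈ Finset.range m, qInt q (t + 2)) 0 := by
  induction m with
  | zero => simpa using hasDerivAt_const (0:ℝ) (1:ℝ)
  | succ m ih =>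
    have hfac : HasDerivAt (fun u : ℝ => 1 - qInt q (m + 2) * u) (-qInt q (m + 2)) 0 := by
      simpa using (((hasDerivAt_id (0:ℝ)).const_mul (qInt q (m + 2))).const_sub 1)
    have heq : (fun u : ℝ => ∏ t ∈ Finset.range (m + 1), (1 - qInt q (t + 2) * u))
        = fun u : ℝ => (∏ t ∈ Finset.range m, (1 - qInt q (t + 2) * u)) *
          (1 - qInt q (m + 2) * u) := by
      funext u
      rw [Finset.prod_range_succ]
    rw [heq, Finset.sum_range_succ]
    refine (ih.mul hfac).congr_deriv ?_
    simp
    ring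

lemma hasDerivAt_Pfun (α : ℝ) (k : ℕ) : HasDerivAt (Pfun q α k) (Pd q α k) 0 := by
  rcases Nat.lt_or_ge k 2 with h | h
  · have hP : Pfun q α k = fun _ => (1:ℝ) := by
      funext u; unfold Pfun; rw [if_neg (by omega)]
    rw [hP]
    unfold Pd
    rw [if_neg (by omega)]
    exact hasDerivAt_const _ _
  · have hqk1 : (q:ℝ) ^ (k - 1) ≠ 0 := by positivity
    have hP : Pfun q α k = fun u =>
        ((1 - α) * (1 - qInt q k * u) * (q ^ (k - 1) + qInt q (k - 1) * u) / q ^ (k - 1) +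
          α * (1 - u)) * ∏ t ∈ Finset.range (k - 2), (1 - qInt q (t + 2) * u) := by
      funext u; unfold Pfun; rw [if_pos h]
    rw [hP]
    unfold Pd
    rw [if_pos h]
    have h1 : HasDerivAt (fun u : ℝ => 1 - qInt q k * u) (-qInt q k) 0 := by
      simpa using (((hasDerivAt_id (0:ℝ)).const_mul (qInt q k)).const_sub 1)
    have h2 : HasDerivAt (fun u : ℝ => (q:ℝ) ^ (k - 1) + qInt q (k - 1) * u)
        (qInt q (k - 1)) 0 := by
      simpa using (((hasDerivAt_id (0:ℝ)).const_mul (qInt q (k - 1))).const_add ((q:ℝ) ^ (k - 1)))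
    have h3 : HasDerivAt (fun u : ℝ => α * (1 - u)) (-α) 0 := by
      simpa using (((hasDerivAt_const (0:ℝ) (1:ℝ)).sub (hasDerivAt_id (0:ℝ))).const_mul α)
    have hA := (((h1.const_mul (1 - α)).mul h2).div_const ((q:ℝ) ^ (k - 1))).add h3
    have := hA.mul (hasDerivAt_Q hq (k - 2))
    refine this.congr_deriv ?_
    simp
    field_simp
    ring
end

section
variable {q : ℝ} (hq : 1 < q)
include hq

/-- `D m = ([m-1] - [m] q^{m-1})/q^{m-1}` is antitone. -/
lemma D_step (m : ℕ) :
    (qInt q m - qInt q (m + 1) * q ^ m) / q ^ m ≤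
      (qInt q (m - 1) - qInt q m * q ^ (m - 1)) / q ^ (m - 1) := by
  have hq0 : (0:ℝ) < q := lt_trans one_pos hq
  cases m with
  | zero => simp [qInt]
  | succ s =>
    have hP : (0:ℝ) < q ^ s := by positivity
    have hP1 : (1:ℝ) ≤ q ^ s := one_le_pow₀ hq.le
    have hA : (0:ℝ) ≤ qInt q s := qInt_nonneg hq s
    have e1 : qInt q (s + 1) = qInt q s + q ^ s := by
      rw [qInt_add hq s 1]; simp [qInt]
    have e2 : qInt q (s + 2) = qInt q (s + 1) + q ^ (s + 1) := by
      rw [show s + 2 = (s+1) + 1 by omega, qInt_add hq (s+1) 1]; simp [qInt]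
    rw [div_le_div_iff₀ (by positivity) (by positivity)]
    simp only [Nat.add_sub_cancel]
    rw [e2, e1, pow_succ]
    have hh1 : q ^ s ≤ q ^ s * q := le_mul_of_one_le_right hP.le hq.le
    have hh2 : (1:ℝ) ≤ q ^ s * q := le_trans hP1 hh1
    have key1 : q ^ s ≤ q ^ s * q * (q ^ s * q) :=
      le_trans hh1 (le_mul_of_one_le_right (by linarith) hh2)
    have key2 : (0:ℝ) ≤ (q - 1) * qInt q s := mul_nonneg (by linarith) hA
    nlinarith [mul_nonneg hP.le
      (by linarith : (0:ℝ) ≤ (q - 1) * qInt q s + q ^ s * q * (q ^ s * q) - q ^ s)]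

lemma D_le {a b : ℕ} (h : a ≤ b) :
    (qInt q (b - 1) - qInt q b * q ^ (b - 1)) / q ^ (b - 1) ≤
      (qInt q (a - 1) - qInt q a * q ^ (a - 1)) / q ^ (a - 1) := by
  induction b, h using Nat.le_induction with
  | base => exact le_rfl
  | succ b hb ih =>
    refine le_trans ?_ ih
    simpa using D_step hq b

lemma Pd_diff_neg (α : ℝ) (hα0 : 0 ≤ α) (hα1 : α ≤ 1) {r k : ℕ} (hr : 1 ≤ r)
    (hk : r + 2 ≤ k) : Pd q α k - Pd q α r < 0 := by
  have hq0 : (0:ℝ) < q := lt_trans one_pos hq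
  have hk2 : 2 ≤ k := by omega
  unfold Pd
  rw [if_pos hk2]
  have hDk := D_le hq (show r ≤ k by omega)
  rcases Nat.lt_or_ge r 2 with h2 | h2
  · -- r = 1, Pd r = 0
    rw [if_neg (by omega)]
    have hD0 := D_le hq (show 0 ≤ k by omega)
    have hD0' : (qInt q (k - 1) - qInt q k * q ^ (k - 1)) / q ^ (k - 1) ≤ 0 := by
      have : (qInt q (0 - 1) - qInt q 0 * q ^ (0 - 1)) / q ^ (0 - 1) = 0 := by
        simp [qInt]
      linarith [hD0, this.le]
    have hSS : 0 < ∑ t ∈ Finset.range (k - 2), qInt q (t + 2) :=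
      Finset.sum_pos (fun t _ => qInt_pos hq (by omega))
        (Finset.nonempty_range_iff.2 (by omega))
    nlinarith [mul_nonneg (by linarith : (0:ℝ) ≤ 1 - α) (neg_nonneg.2 hD0')]
  · rw [if_pos h2]
    have hSS : ∑ t ∈ Finset.range (r - 2), qInt q (t + 2) <
        ∑ t ∈ Finset.range (k - 2), qInt q (t + 2) := by
      apply Finset.sum_lt_sum_of_subset (Finset.range_subset_range.2 (by omega))
        (i := r - 2) (Finset.mem_range.2 (by omega)) (by simp)
      · exact qInt_pos hq (by omega)
      · intro j _ _; exact (qInt_nonneg hq _)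
    nlinarith [mul_nonneg (by linarith : (0:ℝ) ≤ 1 - α) (sub_nonneg.2 hDk)]

lemma lam_diff_tendsto (α : ℝ) {r k : ℕ} (hr : 1 ≤ r) (hk : r + 2 ≤ k) :
    Tendsto (fun n => qInt q n * (lamEig q α n k - lamEig q α n r)) atTop
      (𝓝 (Pd q α k - Pd q α r)) := by
  have hG : HasDerivAt (fun u => Pfun q α k u - Pfun q α r u) (Pd q α k - Pd q α r) 0 :=
    (hasDerivAt_Pfun hq α k).sub (hasDerivAt_Pfun hq α r)
  have hslope := hasDerivAt_iff_tendsto_slope.mp hG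
  have hu : Tendsto (fun n : ℕ => (qInt q n)⁻¹) atTop (𝓝[≠] (0:ℝ)) := by
    apply tendsto_nhdsWithin_of_tendsto_nhds_of_eventually_within _ (tendsto_qInt_inv hq)
    filter_upwards [eventually_ge_atTop 1] with n hn
    simp only [Set.mem_compl_iff, Set.mem_singleton_iff]
    exact inv_ne_zero (ne_of_gt (qInt_pos hq hn))
  have hcomp := hslope.comp hu
  apply hcomp.congr'
  filter_upwards [eventually_ge_atTop (k + 3)] with n hn
  have hN : qInt q n ≠ 0 := ne_of_gt (qInt_pos hq (by omega))
  have e1 : lamEig q α n k = Pfun q α k (qInt q n)⁻¹ := lamEig_eq' hq α (by omega) (by omega)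
  have e2 : lamEig q α n r = Pfun q α r (qInt q n)⁻¹ := lamEig_eq' hq α hr (by omega)
  simp only [Function.comp_apply, slope_def_field, e1, e2]
  rw [Pfun_zero hq, Pfun_zero hq]
  field_simp
  ring
end

theorem ratio_limit_zero (q α : ℝ) (hq : 1 < q) (hα : α ∈ Set.Icc (0 : ℝ) 1)
    (k j i : ℕ) (hk : 2 ≤ k) (hj1 : 1 ≤ j) (hj : j ≤ k - 1) (hi : i < j - 1) :
    Filter.Tendsto
      (fun n : ℕ => aCoef q α n (k - j) (k - i) / (lamEig q α n k - lamEig q α n (k - j)))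
      Filter.atTop (nhds 0) := by
  obtain ⟨hα0, hα1⟩ := hα
  have hr : 1 ≤ k - j := by omega
  have hrk : (k - j) + 2 ≤ k := by omega
  have hKr : (k - j) + 2 ≤ k - i := by omega
  have hA := aCoef_mul_tendsto hq α (k - j) (k - i) hr hKr
  have hB := lam_diff_tendsto hq α hr hrk
  have hc : Pd q α k - Pd q α (k - j) < 0 := Pd_diff_neg hq α hα0 hα1 hr hrk
  have hdiv := hA.div hB (ne_of_lt hc)
  rw [zero_div] at hdiv
  apply hdiv.congr'
  filter_upwards [eventually_ge_atTop 1] with n hn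
  have hN : qInt q n ≠ 0 := ne_of_gt (qInt_pos hq hn)
  exact mul_div_mul_left _ _ hN
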